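/- For the two-point workload W ∈ {1, 9} each with probability 1/2 and a policy that processes each of n such i.i.d. tasks for exactly 1 time unit per period with total budget mδ = n, the achieved completion rate is q_i = 1/2 for each user, and Σ_i q_i μ_i = 2.5 n > n = mδ; hence the outer bound inequality Σ_i q_i E[W_i] ≤ mδ fails for non-NBUE workloads. -/

import Mathlib

open MeasureTheory

/-- Non-NBUE counterexample to the outer bound inequality: with `n` users whose i.i.d.
workloads take value `1` or `9` each with probability `1/2` (mean `5`), and a policy
spending exactly `1` time unit per task per period (completing a task iff its workload
is `≤ 1`, probability `1/2`) with total budget `m δ = n`, the achieved rates are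
`q_i = 1/2` and `Σ_i q_i E[W] = 2.5 n > n = m δ`. -/
theorem non_nbue_outer_bound_fails {Ω : Type*} [MeasurableSpace Ω]
    (μ : Measure Ω) [IsProbabilityMeasure μ]
    (W : Ω → ℝ) (hWm : Measurable W)
    (hsupp : ∀ᵐ ω ∂μ, W ω = 1 ∨ W ω = 9)
    (h1 : μ {ω | W ω = 1} = 1 / 2) (h9 : μ {ω | W ω = 9} = 1 / 2)
    (n m : ℕ) (hn : 1 ≤ n) (δ : ℝ) (hδ : 0 < δ) (hbudget : (m : ℝ) * δ = n) :
    (μ {ω | W ω ≤ 1}).toReal = 1 / 2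
    ∧ ∫ ω, W ω ∂μ = 5
    ∧ (∑ _i : Fin n, (μ {ω | W ω ≤ 1}).toReal * ∫ ω, W ω ∂μ) = 2.5 * n
    ∧ (m : ℝ) * δ < ∑ _i : Fin n, (μ {ω | W ω ≤ 1}).toReal * ∫ ω, W ω ∂μ := by
  have hle : μ {ω | W ω ≤ 1} = 1 / 2 := by
    rw [← h1]
    apply measure_congr
    filter_upwards [hsupp] with ω hω
    have : (W ω ≤ 1) = (W ω = 1) := by
      rcases hω with h | h <;> simp [h] <;> norm_num
    show (W ω ≤ 1) = (W ω = 1)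
    simpa [Set.mem_setOf_eq] using this
  have hint : ∫ ω, W ω ∂μ = 5 := by
    have hcongr : W =ᵐ[μ] fun ω => 1 + Set.indicator {ω | W ω = 9} (fun _ => (8:ℝ)) ω := by
      filter_upwards [hsupp] with ω hω
      rcases hω with h | h
      · have : ω ∉ {ω | W ω = 9} := by simp [Set.mem_setOf_eq, h]
        simp [Set.indicator_of_notMem this, h]
      · have : ω ∈ {ω | W ω = 9} := h
        simp [Set.indicator_of_mem this, h]; norm_num
    rw [integral_congr_ae hcongr]
    have hmeas : MeasurableSet {ω | W ω = 9} := hWm (measurableSet_singleton 9)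
    rw [integral_add (integrable_const 1)
      ((integrable_indicator_iff hmeas).2 (integrableOn_const (by rw [h9]; exact (lt_of_lt_of_le (ENNReal.half_lt_self one_ne_zero ENNReal.one_ne_top) le_top).ne)))]
    rw [integral_indicator_const _ hmeas, measureReal_def, h9]
    simp
    norm_num [ENNReal.toReal_div]
  have htoReal : (μ {ω | W ω ≤ 1}).toReal = 1 / 2 := by
    rw [hle]; simp [ENNReal.toReal_div]
  refine ⟨htoReal, hint, ?_, ?_⟩
  · rw [htoReal, hint]; simp; ring
  · rw [htoReal, hint, hbudget]
    have : (1:ℝ) ≤ n := by exact_mod_cast hn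
    simp only [Finset.sum_const, Finset.card_univ, Fintype.card_fin, nsmul_eq_mul]
    nlinarith
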